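/- For any subset A of ℝ, if the Hattori space (ℝ, τ_A) is locally compact, then ℝ\A is closed in the Euclidean topology and discrete as a subspace of the Sorgenfrey line. -/

import Mathlib

open Set

/-- The Hattori topology on ℝ: points of `A` have Euclidean neighborhood base
`(x-ε, x+ε)`, points outside `A` have Sorgenfrey neighborhood base `[x, x+ε)`. -/
def hattori (A : Set ℝ) : TopologicalSpace ℝ where
  IsOpen U := ∀ x ∈ U, ∃ ε > (0 : ℝ),
    (x ∈ A → Ioo (x - ε) (x + ε) ⊆ U) ∧ (x ∉ A → Ico x (x + ε) ⊆ U)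
  isOpen_univ := fun x _ => ⟨1, one_pos, fun _ => subset_univ _, fun _ => subset_univ _⟩
  isOpen_inter := by
    intro U V hU hV x hx
    obtain ⟨ε₁, hε₁, h₁, h₁'⟩ := hU x hx.1
    obtain ⟨ε₂, hε₂, h₂, h₂'⟩ := hV x hx.2
    have l1 := min_le_left ε₁ ε₂
    have l2 := min_le_right ε₁ ε₂
    refine ⟨min ε₁ ε₂, lt_min hε₁ hε₂, fun hA => ?_, fun hA => ?_⟩
    · intro y hy
      exact ⟨h₁ hA ⟨by linarith [hy.1], by linarith [hy.2]⟩,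
             h₂ hA ⟨by linarith [hy.1], by linarith [hy.2]⟩⟩
    · intro y hy
      exact ⟨h₁' hA ⟨hy.1, by linarith [hy.2]⟩, h₂' hA ⟨hy.1, by linarith [hy.2]⟩⟩
  isOpen_sUnion := by
    intro S hS x hx
    obtain ⟨U, hU, hxU⟩ := hx
    obtain ⟨ε, hε, h, h'⟩ := hS U hU x hxU
    exact ⟨ε, hε, fun hA => (h hA).trans (subset_sUnion_of_mem hU),
      fun hA => (h' hA).trans (subset_sUnion_of_mem hU)⟩

/-- The Sorgenfrey (lower limit) topology on ℝ. -/
def sorgenfrey : TopologicalSpace ℝ :=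
  TopologicalSpace.generateFrom {S | ∃ a b : ℝ, S = Ico a b}
open Set TopologicalSpace

lemma hattori_open_aux (A : Set ℝ) {b : ℝ} (hb : b ∉ A) (c : ℝ) :
    @IsOpen ℝ (hattori A) (Ici b ∪ Iio c) := by
  show ∀ x ∈ Ici b ∪ Iio c, ∃ ε > (0:ℝ),
    (x ∈ A → Ioo (x - ε) (x + ε) ⊆ Ici b ∪ Iio c) ∧
    (x ∉ A → Ico x (x + ε) ⊆ Ici b ∪ Iio c)
  intro x hx
  rcases hx with hx | hx
  · rcases eq_or_lt_of_le (mem_Ici.mp hx) with rfl | hlt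
    · exact ⟨1, one_pos, fun hA => absurd hA hb, fun _ y hy => Or.inl hy.1⟩
    · refine ⟨x - b, by linarith, fun _ y hy => Or.inl ?_, fun _ y hy => Or.inl ?_⟩
      · have := hy.1; simp only [mem_Ici]; linarith
      · have := hy.1; simp only [mem_Ici]; linarith
  · have hx' : x < c := hx
    refine ⟨c - x, by linarith, fun _ y hy => Or.inr ?_, fun _ y hy => Or.inr ?_⟩
    · have := hy.2; simp only [mem_Iio]; linarith
    · have := hy.2; simp only [mem_Iio]; linarith

lemma hattori_not_left_limit (A : Set ℝ) {K : Set ℝ}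
    (hK : @IsCompact ℝ (hattori A) K) {a b : ℝ} (hb : b ∉ A) (hab : a < b)
    (hsub : Ioo a b ⊆ K) : False := by
  have hcov : K ⊆ ⋃ n : ℕ, (Ici b ∪ Iio (b - 1 / (n + 1))) := by
    intro y _
    rcases le_or_gt b y with hy | hy
    · exact mem_iUnion.mpr ⟨0, Or.inl hy⟩
    · obtain ⟨n, hn⟩ := exists_nat_one_div_lt (show (0:ℝ) < b - y by linarith)
      exact mem_iUnion.mpr ⟨n, Or.inr (by simp only [mem_Iio]; linarith)⟩
  obtain ⟨t, ht⟩ := @IsCompact.elim_finite_subcover ℝ (hattori A) K ℕ hK _ (fun n => hattori_open_aux A hb _) hcov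
  set t' : Finset ℕ := insert 0 t with ht'
  have htne : t'.Nonempty := ⟨0, Finset.mem_insert_self 0 t⟩
  set N := t'.max' htne with hN
  set δ : ℝ := 1 / (N + 1) with hδ
  have hδpos : 0 < δ := by positivity
  have hKsub : K ⊆ Ici b ∪ Iio (b - δ) := by
    intro y hy
    obtain ⟨n, hn, hyn⟩ := mem_iUnion₂.mp (ht hy)
    rcases hyn with hyn | hyn
    · exact Or.inl hyn
    · refine Or.inr ?_
      have hnN : n ≤ N := t'.le_max' n (Finset.mem_insert_of_mem hn)
      have : δ ≤ 1 / ((n:ℝ) + 1) := by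
        apply one_div_le_one_div_of_le (by positivity)
        exact_mod_cast Nat.succ_le_succ hnN
      have := mem_Iio.mp hyn
      simp only [mem_Iio]; linarith
  set y : ℝ := (max a (b - δ) + b) / 2 with hy
  have hmax : max a (b - δ) < b := max_lt hab (by linarith)
  have hy1 : max a (b - δ) < y := by rw [hy]; linarith
  have hy2 : y < b := by rw [hy]; linarith
  have hyK : y ∈ K := hsub ⟨lt_of_le_of_lt (le_max_left _ _) hy1, hy2⟩
  rcases hKsub hyK with h1 | h1
  · exact absurd (mem_Ici.mp h1) (not_le.mpr hy2)
  · exact absurd (mem_Iio.mp h1) (not_lt.mpr (le_of_lt (lt_of_le_of_lt (le_max_right _ _) hy1)))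

lemma hattori_nbhd (A : Set ℝ) (h : @WeaklyLocallyCompactSpace ℝ (hattori A)) (x : ℝ) :
    ∃ ε > (0:ℝ), ∃ K : Set ℝ, @IsCompact ℝ (hattori A) K ∧
      (x ∈ A → Ioo (x - ε) (x + ε) ⊆ K) ∧ (x ∉ A → Ico x (x + ε) ⊆ K) := by
  obtain ⟨K, hKc, hKn⟩ := @WeaklyLocallyCompactSpace.exists_compact_mem_nhds ℝ (hattori A) h x
  obtain ⟨U, hUK, hUo, hxU⟩ := (@mem_nhds_iff ℝ (hattori A) x K).mp hKn
  obtain ⟨ε, hε, h1, h2⟩ := hUo x hxU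
  exact ⟨ε, hε, K, hKc, fun hA => (h1 hA).trans hUK, fun hA => (h2 hA).trans hUK⟩
theorem stmt16 (A : Set ℝ) (h : @WeaklyLocallyCompactSpace ℝ (hattori A)) :
    IsClosed Aᶜ ∧
      @DiscreteTopology ↑(Aᶜ)
        (TopologicalSpace.induced ((↑) : ↑(Aᶜ) → ℝ) sorgenfrey) := by
  -- Key: a right interval of every point lies in A
  have key : ∀ x : ℝ, ∃ ε > (0:ℝ),
      (x ∈ A → Ioo (x - ε) (x + ε) ⊆ A) ∧ Ioo x (x + ε) ⊆ A := by
    intro x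
    obtain ⟨ε, hε, K, hKc, h1, h2⟩ := hattori_nbhd A h x
    refine ⟨ε, hε, fun hA => ?_, ?_⟩
    · intro b hb
      by_contra hbA
      refine hattori_not_left_limit A hKc hbA hb.1 ?_
      intro y hy
      exact h1 hA ⟨hy.1, lt_trans hy.2 hb.2⟩
    · rcases Classical.em (x ∈ A) with hA | hA
      · intro c hc
        by_contra hcA
        refine hattori_not_left_limit A hKc hcA hc.1 ?_
        intro y hy
        exact h1 hA ⟨by linarith [hy.1, hc.1], lt_trans hy.2 hc.2⟩
      · intro c hc
        by_contra hcA
        refine hattori_not_left_limit A hKc hcA hc.1 ?_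
        intro y hy
        exact h2 hA ⟨le_of_lt hy.1, lt_trans hy.2 hc.2⟩
  constructor
  · rw [isClosed_compl_iff, Metric.isOpen_iff]
    intro a ha
    obtain ⟨ε, hε, h1, _⟩ := key a
    exact ⟨ε, hε, by rw [Real.ball_eq_Ioo]; exact h1 ha⟩
  · letI : TopologicalSpace ↑(Aᶜ) := TopologicalSpace.induced ((↑) : ↑(Aᶜ) → ℝ) sorgenfrey
    refine discreteTopology_iff_isOpen_singleton.mpr ?_
    rintro ⟨b, hb⟩
    obtain ⟨ε, hε, _, h2⟩ := key b
    refine (@isOpen_induced_iff ↑(Aᶜ) ℝ sorgenfrey _ _).mpr ⟨Ico b (b + ε), ?_, ?_⟩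
    · exact TopologicalSpace.GenerateOpen.basic _ ⟨b, b + ε, rfl⟩
    · ext ⟨x, hx⟩
      simp only [mem_preimage, mem_Ico, mem_singleton_iff, Subtype.mk.injEq]
      constructor
      · rintro ⟨hx1, hx2⟩
        rcases eq_or_lt_of_le hx1 with rfl | hlt
        · rfl
        · exact absurd (h2 ⟨hlt, hx2⟩) hx
      · rintro rfl
        exact ⟨le_refl _, by linarith⟩
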